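/- Let P be a nonempty finite set of points in ℝ² contained in an axis-aligned rectangle with corners c₁, c₂, c₃, c₄ such that each edge contains at least one point of P. Then for any line segment L, the maximum over p ∈ P of dist(p, L) is at least the minimum over the four corners cᵢ of dist(cᵢ, L). -/

import Mathlib

set_option maxHeartbeats 1000000

/-- If a nonempty finite set `P` of points in the plane is contained in an axis-aligned
rectangle with corners `c₁,...,c₄` and each edge of the rectangle contains a point of `P`,
then for any segment `L = [s,e]`, the maximum distance from `P` to `L` is at least the
minimum corner-to-`L` distance: some `p ∈ P` realizes it. -/
theorem stmt_2 (P : Finset (EuclideanSpace ℝ (Fin 2))) (hP : P.Nonempty)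
    (x₁ x₂ y₁ y₂ : ℝ) (hx : x₁ ≤ x₂) (hy : y₁ ≤ y₂)
    (hbox : ∀ p ∈ P, x₁ ≤ p 0 ∧ p 0 ≤ x₂ ∧ y₁ ≤ p 1 ∧ p 1 ≤ y₂)
    (hbottom : ∃ p ∈ P, p 1 = y₁) (htop : ∃ p ∈ P, p 1 = y₂)
    (hleft : ∃ p ∈ P, p 0 = x₁) (hright : ∃ p ∈ P, p 0 = x₂)
    (s e : EuclideanSpace ℝ (Fin 2)) :
    ∃ p ∈ P,
      min (min (Metric.infDist ![x₁, y₁] (segment ℝ s e))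
               (Metric.infDist ![x₂, y₁] (segment ℝ s e)))
          (min (Metric.infDist ![x₂, y₂] (segment ℝ s e))
               (Metric.infDist ![x₁, y₂] (segment ℝ s e)))
        ≤ Metric.infDist p (segment ℝ s e) := by
  classical
  obtain ⟨qb, hqbP, hqb⟩ := hbottom
  obtain ⟨ql, hqlP, hql⟩ := hleft
  obtain ⟨qr, hqrP, hqr⟩ := hright
  have hSne : (segment ℝ s e).Nonempty := ⟨s, left_mem_segment ℝ s e⟩
  -- sup-metric infDist
  set dI : (Fin 2 → ℝ) → ℝ :=
    fun c => @Metric.infDist (Fin 2 → ℝ) _ c (segment ℝ s e) with hdI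
  -- comparison of the two metrics
  have hdist : ∀ a b : EuclideanSpace ℝ (Fin 2),
      @dist (Fin 2 → ℝ) _ a b ≤ dist a b := by
    intro a b
    rw [dist_pi_le_iff dist_nonneg]
    intro i
    rw [EuclideanSpace.dist_eq]
    have h1 : dist (a i) (b i) = Real.sqrt (dist (a i) (b i) ^ 2) :=
      (Real.sqrt_sq dist_nonneg).symm
    rw [h1]
    exact Real.sqrt_le_sqrt (Finset.single_le_sum
      (f := fun j => dist (a j) (b j) ^ 2) (fun j _ => sq_nonneg _) (Finset.mem_univ i))
  have hseg : ∀ y : EuclideanSpace ℝ (Fin 2), y ∈ segment ℝ s e →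
      y.ofLp ∈ segment ℝ s.ofLp e.ofLp := by
    rintro y ⟨a, b, ha, hb, hab, rfl⟩
    exact ⟨a, b, ha, hb, hab, by simp⟩
  have hSne' : (segment ℝ s.ofLp e.ofLp).Nonempty := ⟨s.ofLp, left_mem_segment ℝ _ _⟩
  have hbridge : ∀ p : EuclideanSpace ℝ (Fin 2),
      dI p ≤ Metric.infDist p (segment ℝ s e) := by
    intro p
    by_contra hcon
    push_neg at hcon
    obtain ⟨y, hyS, hyd⟩ := (Metric.infDist_lt_iff hSne).mp hcon
    have h1 : dI p ≤ @dist (Fin 2 → ℝ) _ p y := Metric.infDist_le_dist_of_mem (hseg y hyS)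
    have h2 := hdist p y
    linarith
  -- the point of P realizing the max of the three edge distances
  obtain ⟨p, hpP, hpD⟩ : ∃ p ∈ P, max (max (dI ql) (dI qb)) (dI qr) ≤ dI p := by
    rcases le_total (max (dI ql) (dI qb)) (dI qr) with h | h
    · exact ⟨qr, hqrP, max_le h le_rfl⟩
    · rcases le_total (dI ql) (dI qb) with h2 | h2
      · exact ⟨qb, hqbP, max_le (max_le h2 le_rfl) (h.trans (max_le h2 le_rfl))⟩
      · exact ⟨ql, hqlP, max_le (max_le le_rfl h2) (h.trans (max_le le_rfl h2))⟩
  refine ⟨p, hpP, ?_⟩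
  -- main claim: min of the two bottom corners ≤ max of the three edge distances
  have key : min (dI ![x₁, y₁]) (dI ![x₂, y₁]) ≤ max (max (dI ql) (dI qb)) (dI qr) := by
    by_contra hcon
    push_neg at hcon
    set D := max (max (dI ql) (dI qb)) (dI qr) with hD
    set m := min (dI ![x₁, y₁]) (dI ![x₂, y₁]) with hm
    set r := (D + m) / 2 with hr
    have hD0 : 0 ≤ D := le_trans Metric.infDist_nonneg (le_max_right _ _)
    have hDr : D < r := by simp only [hr]; linarith
    have hrm : r < m := by simp only [hr]; linarith
    have hr0 : 0 ≤ r := hD0.trans hDr.le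
    -- corner exclusion helpers
    have hcor1 : ∀ (cx cy : ℝ), r < dI ![cx, cy] → ∀ n : Fin 2 → ℝ, n ∈ segment ℝ s.ofLp e.ofLp →
        |cx - n 0| ≤ r → r < |cy - n 1| := by
      intro cx cy hcd n hn h0
      by_contra h1
      push_neg at h1
      have hall : ∀ i, dist ((![cx, cy] : Fin 2 → ℝ) i) (n i) ≤ r := by
        intro i; fin_cases i
        · simpa [Real.dist_eq] using h0
        · simpa [Real.dist_eq] using h1
      have hle := (dist_pi_le_iff hr0).2 hall
      have h2 : dI ![cx, cy] ≤ @dist (Fin 2 → ℝ) _ ![cx, cy] n :=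
        Metric.infDist_le_dist_of_mem hn
      linarith
    have hcor0 : ∀ (cx cy : ℝ), r < dI ![cx, cy] → ∀ n : Fin 2 → ℝ, n ∈ segment ℝ s.ofLp e.ofLp →
        |cy - n 1| ≤ r → r < |cx - n 0| := by
      intro cx cy hcd n hn h1
      by_contra h0
      push_neg at h0
      have hall : ∀ i, dist ((![cx, cy] : Fin 2 → ℝ) i) (n i) ≤ r := by
        intro i; fin_cases i
        · simpa [Real.dist_eq] using h0
        · simpa [Real.dist_eq] using h1
      have hle := (dist_pi_le_iff hr0).2 hall
      have h2 : dI ![cx, cy] ≤ @dist (Fin 2 → ℝ) _ ![cx, cy] n :=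
        Metric.infDist_le_dist_of_mem hn
      linarith
    have hc1 : r < dI ![x₁, y₁] := lt_of_lt_of_le hrm (min_le_left _ _)
    have hc2 : r < dI ![x₂, y₁] := lt_of_lt_of_le hrm (min_le_right _ _)
    -- near points on the segment for the three edge points
    have hql' : dI ql ≤ D := le_trans (le_max_left _ _) (le_max_left _ _)
    have hqb' : dI qb ≤ D := le_trans (le_max_right _ _) (le_max_left _ _)
    have hqr' : dI qr ≤ D := le_max_right _ _
    obtain ⟨nl, hnlS, hnl⟩ := (Metric.infDist_lt_iff (α := Fin 2 → ℝ) (s := segment ℝ s.ofLp e.ofLp) hSne').mp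
      (lt_of_le_of_lt hql' hDr)
    obtain ⟨nb, hnbS, hnb⟩ := (Metric.infDist_lt_iff (α := Fin 2 → ℝ) (s := segment ℝ s.ofLp e.ofLp) hSne').mp
      (lt_of_le_of_lt hqb' hDr)
    obtain ⟨nr, hnrS, hnr⟩ := (Metric.infDist_lt_iff (α := Fin 2 → ℝ) (s := segment ℝ s.ofLp e.ofLp) hSne').mp
      (lt_of_le_of_lt hqr' hDr)
    -- coordinate bounds
    have hl0 : |ql 0 - nl 0| < r := by
      rw [← Real.dist_eq]; exact (dist_le_pi_dist ql nl 0).trans_lt hnl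
    have hl1 : |ql 1 - nl 1| < r := by
      rw [← Real.dist_eq]; exact (dist_le_pi_dist ql nl 1).trans_lt hnl
    have hb0 : |qb 0 - nb 0| < r := by
      rw [← Real.dist_eq]; exact (dist_le_pi_dist qb nb 0).trans_lt hnb
    have hb1 : |qb 1 - nb 1| < r := by
      rw [← Real.dist_eq]; exact (dist_le_pi_dist qb nb 1).trans_lt hnb
    have hr0' : |qr 0 - nr 0| < r := by
      rw [← Real.dist_eq]; exact (dist_le_pi_dist qr nr 0).trans_lt hnr
    have hr1' : |qr 1 - nr 1| < r := by
      rw [← Real.dist_eq]; exact (dist_le_pi_dist qr nr 1).trans_lt hnr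
    rw [hql] at hl0
    rw [hqr] at hr0'
    rw [hqb] at hb1
    rw [abs_sub_lt_iff] at hl0 hl1 hb0 hb1 hr0' hr1'
    obtain ⟨hxl, hxl2, hyl, hyl2⟩ := hbox ql hqlP
    obtain ⟨hxb, hxb2, hyb, hyb2⟩ := hbox qb hqbP
    obtain ⟨hxr, hxr2, hyr, hyr2⟩ := hbox qr hqrP
    -- nl: close to x₁ in coord 0, hence coord 1 above y₁ + r
    have hnlY : y₁ + r < nl 1 := by
      have h := hcor1 x₁ y₁ hc1 nl hnlS
        (by rw [abs_sub_le_iff]; constructor <;> linarith [hl0.1, hl0.2])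
      rcases lt_abs.mp h with h' | h' <;> linarith [hl1.1, hl1.2]
    -- nr: close to x₂ in coord 0, hence coord 1 above y₁ + r
    have hnrY : y₁ + r < nr 1 := by
      have h := hcor1 x₂ y₁ hc2 nr hnrS
        (by rw [abs_sub_le_iff]; constructor <;> linarith [hr0'.1, hr0'.2])
      rcases lt_abs.mp h with h' | h' <;> linarith [hr1'.1, hr1'.2]
    -- nb: close to y₁ in coord 1, hence coord 0 strictly between x₁ + r and x₂ - r
    have hnbY : nb 1 < y₁ + r := by linarith [hb1.2]
    have hb1' : |y₁ - nb 1| ≤ r := by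
      rw [abs_sub_le_iff]; constructor <;> linarith [hb1.1, hb1.2]
    have hnbX1 : x₁ + r < nb 0 := by
      have h := hcor0 x₁ y₁ hc1 nb hnbS hb1'
      rcases lt_abs.mp h with h' | h' <;> linarith [hb0.1, hb0.2]
    have hnbX2 : nb 0 < x₂ - r := by
      have h := hcor0 x₂ y₁ hc2 nb hnbS hb1'
      rcases lt_abs.mp h with h' | h' <;> linarith [hb0.1, hb0.2]
    have hnlX : nl 0 < x₁ + r := by linarith [hl0.2]
    have hnrX : x₂ - r < nr 0 := by linarith [hr0'.1]
    -- decompose the three points on the segment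
    obtain ⟨al, bl, hal, hbl, habl, hleq⟩ := hnlS
    obtain ⟨ab', bb, hab', hbb, habb, hbeq⟩ := hnbS
    obtain ⟨ar, br, har, hbr, habr, hreq⟩ := hnrS
    have hleq0 : al * s 0 + bl * e 0 = nl 0 := by
      have := congrFun hleq 0; simpa using this
    have hleq1 : al * s 1 + bl * e 1 = nl 1 := by
      have := congrFun hleq 1; simpa using this
    have hbeq0 : ab' * s 0 + bb * e 0 = nb 0 := by
      have := congrFun hbeq 0; simpa using this
    have hbeq1 : ab' * s 1 + bb * e 1 = nb 1 := by
      have := congrFun hbeq 1; simpa using this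
    have hreq0 : ar * s 0 + br * e 0 = nr 0 := by
      have := congrFun hreq 0; simpa using this
    have hreq1 : ar * s 1 + br * e 1 = nr 1 := by
      have := congrFun hreq 1; simpa using this
    -- collinearity algebra
    have eA0 : (bb - bl) * (e 0 - s 0) = nb 0 - nl 0 := by
      linear_combination hbeq0 - hleq0 - s 0 * habb + s 0 * habl
    have eB0 : (br - bb) * (e 0 - s 0) = nr 0 - nb 0 := by
      linear_combination hreq0 - hbeq0 - s 0 * habr + s 0 * habb
    have eA1 : (bb - bl) * (e 1 - s 1) = nb 1 - nl 1 := by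
      linear_combination hbeq1 - hleq1 - s 1 * habb + s 1 * habl
    have eB1 : (br - bb) * (e 1 - s 1) = nr 1 - nb 1 := by
      linear_combination hreq1 - hbeq1 - s 1 * habr + s 1 * habb
    have pAu : 0 < (bb - bl) * (e 0 - s 0) := by rw [eA0]; linarith
    have pBu : 0 < (br - bb) * (e 0 - s 0) := by rw [eB0]; linarith
    have pAv : (bb - bl) * (e 1 - s 1) < 0 := by rw [eA1]; linarith
    have pBv : 0 < (br - bb) * (e 1 - s 1) := by rw [eB1]; linarith
    have hP1 := mul_pos pAu pBv
    have hP2 := mul_neg_of_neg_of_pos pAv pBu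
    have hring : ((bb - bl) * (e 0 - s 0)) * ((br - bb) * (e 1 - s 1)) =
        ((bb - bl) * (e 1 - s 1)) * ((br - bb) * (e 0 - s 0)) := by ring
    linarith only [hP1, hP2, hring]
  calc min (min (Metric.infDist ![x₁, y₁] (segment ℝ s e))
               (Metric.infDist ![x₂, y₁] (segment ℝ s e)))
          (min (Metric.infDist ![x₂, y₂] (segment ℝ s e))
               (Metric.infDist ![x₁, y₂] (segment ℝ s e)))
      ≤ min (dI ![x₁, y₁]) (dI ![x₂, y₁]) := min_le_left _ _
    _ ≤ max (max (dI ql) (dI qb)) (dI qr) := key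
    _ ≤ dI p := hpD
    _ ≤ Metric.infDist p (segment ℝ s e) := hbridge p
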